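/- Let F be a finite field with q = |F| elements, let m ≤ n ≤ N be natural numbers, and let W be the subspace of F^N spanned by the first m standard basis vectors. Then the number of orbits f_n(GL(N,F)) of GL(N,F) on n-element subsets of F^N satisfies f_n(GL(N,F)) · |GL(m,F)| ≥ #{S ⊆ F^N : |S| = n, S ⊆ W, and S spans W}. -/

import Mathlib

open Matrix MulAction Pointwise

set_option synthInstance.maxHeartbeats 1000000
set_option maxHeartbeats 2000000
set_option linter.unusedSectionVars false

/-- The action of `GL(N,F)` on `F^N` by matrix-vector multiplication. -/
instance glVecAction {F : Type*} [Field F] {N : ℕ} :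
    MulAction (GL (Fin N) F) (Fin N → F) where
  smul g v := (g : Matrix (Fin N) (Fin N) F).mulVec v
  one_smul v := by
    show ((1 : GL (Fin N) F) : Matrix (Fin N) (Fin N) F).mulVec v = v
    simp
  mul_smul g h v := by
    show ((g * h : GL (Fin N) F) : Matrix (Fin N) (Fin N) F).mulVec v
      = (g : Matrix (Fin N) (Fin N) F).mulVec ((h : Matrix (Fin N) (Fin N) F).mulVec v)
    simp [Matrix.mulVec_mulVec]

/-- The number of orbits of a `G`-action meeting a set `P` of states; for a `G`-invariant
`P` this is the number of orbits of `G` on `P`. -/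
noncomputable def numOrbitsOn (G : Type*) {X : Type*} [Group G] [MulAction G X]
    (P : Set X) : ℕ :=
  Nat.card (Quotient.mk (MulAction.orbitRel G X) '' P)

section aux
variable {F : Type*} [Field F] [Fintype F] [DecidableEq F] {N : ℕ}

/-- `g : GL(N,F)` as a linear equivalence of `F^N`. -/
noncomputable def glE (g : GL (Fin N) F) : (Fin N → F) ≃ₗ[F] (Fin N → F) :=
  LinearMap.GeneralLinearGroup.generalLinearEquiv F (Fin N → F) (Matrix.GeneralLinearGroup.toLin g)

lemma glE_apply (g : GL (Fin N) F) (v : Fin N → F) : glE g v = g • v := rfl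

lemma span_smul_set (g : GL (Fin N) F) (s : Set (Fin N → F)) :
    Submodule.span F (g • s) = Submodule.map (glE g).toLinearMap (Submodule.span F s) := by
  rw [← Submodule.span_image]
  rfl

end aux

/-- Lower bound step: the number of orbits `f_n(GL(N,F))` on `n`-element subsets of `F^N`,
multiplied by `|GL(m,F)|`, is at least the number of `n`-element subsets of the span `W`
of the first `m` standard basis vectors that span `W`. -/
theorem gl_orbits_mul_card_ge (F : Type*) [Field F] [Fintype F] [DecidableEq F]
    (N n m : ℕ) (hmn : m ≤ n) (hnN : n ≤ N) :
    Nat.card {S : Finset (Fin N → F) |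
        S.card = n ∧
        (S : Set (Fin N → F)) ⊆
          (Submodule.span F
            (Set.range fun i : Fin m => (Pi.single (Fin.castLE (hmn.trans hnN) i) (1 : F) : Fin N → F)) :
              Set (Fin N → F)) ∧
        Submodule.span F (S : Set (Fin N → F)) =
          Submodule.span F
            (Set.range fun i : Fin m => (Pi.single (Fin.castLE (hmn.trans hnN) i) (1 : F) : Fin N → F))}
      ≤ numOrbitsOn (GL (Fin N) F) {S : Finset (Fin N → F) | S.card = n}
          * Nat.card (GL (Fin m) F) := by
  classical
  set v : Fin m → (Fin N → F) := fun i => Pi.single (Fin.castLE (hmn.trans hnN) i) 1 with hv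
  set W : Submodule F (Fin N → F) := Submodule.span F (Set.range v) with hWdef
  -- linear independence of v, basis of W
  have hli : LinearIndependent F v := by
    have h1 : v = (fun j : Fin N => (Pi.single j (1:F) : Fin N → F)) ∘ Fin.castLE (hmn.trans hnN) := rfl
    have hb := (Pi.basisFun F (Fin N)).linearIndependent
    have h2 : ⇑(Pi.basisFun F (Fin N)) = fun j : Fin N => (Pi.single j (1:F) : Fin N → F) := by
      funext j; simp [Pi.basisFun_apply]
    rw [h2] at hb
    rw [h1]
    exact hb.comp _ (Fin.castLE_injective _)
  let b : Module.Basis (Fin m) F W := Module.Basis.span hli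
  let ψ : W ≃ₗ[F] (Fin m → F) := b.equivFun
  -- the quotient and maps
  let f : Finset (Fin N → F) → Quotient (orbitRel (GL (Fin N) F) (Finset (Fin N → F))) :=
    Quotient.mk _
  let p : Finset (Fin N → F) → Prop := fun S =>
    S.card = n ∧ (S : Set (Fin N → F)) ⊆ (W : Set _) ∧ Submodule.span F (S : Set _) = W
  let s : Finset (Finset (Fin N → F)) := Finset.univ.filter p
  -- step 1 : identify Nat.card of the set with s.card
  have hset : {S : Finset (Fin N → F) | p S} = (↑s : Set (Finset (Fin N → F))) := by
    ext S; simp [s, p]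
  have hcard1 : Nat.card {S : Finset (Fin N → F) | p S} = s.card := by
    rw [hset, Nat.card_coe_set_eq, Set.ncard_coe_finset]
  -- the injection into GL m from equivalences
  let χ : ((Fin m → F) ≃ₗ[F] (Fin m → F)) → GL (Fin m) F := fun e =>
    Matrix.GeneralLinearGroup.toLin.symm
      ((LinearMap.GeneralLinearGroup.generalLinearEquiv F (Fin m → F)).symm e)
  have hχ : Function.Injective χ := by
    intro a b hab
    have := congrArg (fun x => LinearMap.GeneralLinearGroup.generalLinearEquiv F (Fin m → F)
      (Matrix.GeneralLinearGroup.toLin x)) hab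
    simpa [χ] using this
  -- step 2 : fiber bound
  have key : ∀ c ∈ s.image f, (s.filter fun S => f S = c).card ≤ Nat.card (GL (Fin m) F) := by
    intro c hc
    obtain ⟨S₀, hS₀s, hfS₀⟩ := Finset.mem_image.mp hc
    obtain ⟨hS₀n, hS₀W, hS₀span⟩ := (Finset.mem_filter.mp hS₀s).2
    -- condition and chosen group elements
    let cond : Finset (Fin N → F) → Prop := fun S => ∃ g : GL (Fin N) F,
      g • S₀ = S ∧ Submodule.map (glE g).toLinearMap W = W
    have hcond : ∀ S ∈ s.filter (fun S => f S = c), cond S := by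
      intro S hS
      obtain ⟨hSs, hfS⟩ := Finset.mem_filter.mp hS
      obtain ⟨hSn, hSW, hSspan⟩ := (Finset.mem_filter.mp hSs).2
      have horb : S ∈ orbit (GL (Fin N) F) S₀ := by
        have : f S = f S₀ := by rw [hfS, hfS₀]
        exact Quotient.eq''.mp this
      obtain ⟨g, hg⟩ := horb
      have hg' : g • S₀ = S := hg
      refine ⟨g, hg', ?_⟩
      calc Submodule.map (glE g).toLinearMap W
          = Submodule.map (glE g).toLinearMap (Submodule.span F (S₀ : Set _)) := by rw [hS₀span]
        _ = Submodule.span F (g • (S₀ : Set (Fin N → F))) := (span_smul_set g _).symm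
        _ = Submodule.span F ((g • S₀ : Finset (Fin N → F)) : Set (Fin N → F)) := by
            rw [Finset.coe_smul_finset]
        _ = Submodule.span F (S : Set _) := by rw [hg']
        _ = W := hSspan
    -- the map into GL m
    let eW : ∀ S, cond S → (W ≃ₗ[F] W) := fun S h =>
      ((glE h.choose).submoduleMap W).trans (LinearEquiv.ofEq _ _ h.choose_spec.2)
    let φ : Finset (Fin N → F) → GL (Fin m) F := fun S =>
      if h : cond S then χ (ψ.symm.trans ((eW S h).trans ψ)) else 1
    have hinj : Set.InjOn φ ↑(s.filter fun S => f S = c) := by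
      intro S hS S' hS' hφ
      have hcS := hcond S (by simpa using hS)
      have hcS' := hcond S' (by simpa using hS')
      rw [show φ S = χ (ψ.symm.trans ((eW S hcS).trans ψ)) from dif_pos hcS,
        show φ S' = χ (ψ.symm.trans ((eW S' hcS').trans ψ)) from dif_pos hcS'] at hφ
      have heq : eW S hcS = eW S' hcS' := by
        have h1 := hχ hφ
        refine LinearEquiv.ext fun w => ?_
        have h2 := DFunLike.congr_fun h1 (ψ w)
        simp only [LinearEquiv.trans_apply, LinearEquiv.symm_apply_apply] at h2
        exact ψ.injective h2
      -- pointwise equality of the group elements on S₀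
      have hpt : ∀ x ∈ S₀, hcS.choose • x = hcS'.choose • x := by
        intro x hx
        have hxW : x ∈ W := hS₀W hx
        have := congrArg Subtype.val (DFunLike.congr_fun heq ⟨x, hxW⟩)
        simpa [eW, LinearEquiv.submoduleMap_apply, glE_apply] using this
      have : hcS.choose • S₀ = hcS'.choose • S₀ := by
        rw [Finset.smul_finset_def, Finset.smul_finset_def]
        exact Finset.image_congr fun x hx => hpt x hx
      rw [← hcS.choose_spec.1, ← hcS'.choose_spec.1, this]
    calc (s.filter fun S => f S = c).card
        ≤ (Finset.univ : Finset (GL (Fin m) F)).card :=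
          Finset.card_le_card_of_injOn φ (fun a _ => Finset.mem_univ _) hinj
      _ = Nat.card (GL (Fin m) F) := by rw [Nat.card_eq_fintype_card, Finset.card_univ]
  have h2 := Finset.card_le_mul_card_image s (Nat.card (GL (Fin m) F)) key
  -- step 3 : bound the number of classes by numOrbitsOn
  have h3 : (s.image f).card ≤ numOrbitsOn (GL (Fin N) F) {S : Finset (Fin N → F) | S.card = n} := by
    rw [← Set.ncard_coe_finset]
    unfold numOrbitsOn
    rw [← Nat.card_coe_set_eq]
    apply Set.ncard_le_ncard
    · intro c hc
      simp only [Finset.coe_image, Set.mem_image] at hc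
      obtain ⟨S, hSs, rfl⟩ := hc
      have hSn : S.card = n := ((Finset.mem_filter.mp (Finset.mem_coe.mp hSs)).2).1
      exact ⟨S, hSn, rfl⟩
    · exact Set.toFinite _
  show Nat.card {S : Finset (Fin N → F) | p S}
      ≤ numOrbitsOn (GL (Fin N) F) {S : Finset (Fin N → F) | S.card = n}
          * Nat.card (GL (Fin m) F)
  calc Nat.card {S : Finset (Fin N → F) | p S} = s.card := hcard1
    _ ≤ Nat.card (GL (Fin m) F) * (s.image f).card := h2
    _ ≤ Nat.card (GL (Fin m) F)
          * numOrbitsOn (GL (Fin N) F) {S : Finset (Fin N → F) | S.card = n} :=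
        Nat.mul_le_mul_left _ h3
    _ = numOrbitsOn (GL (Fin N) F) {S : Finset (Fin N → F) | S.card = n}
          * Nat.card (GL (Fin m) F) := mul_comm _ _
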